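/- Suppose that for every u < v and every ε > 0, P[(1/t) S_t(u,v) ≥ (v-u)(f(u)+ε)] → 0 and P[(1/t) S_t(u,v) ≤ (v-u)(f(v)-ε)] → 0 as t → ∞, where S_t(u,v) is a family of random variables satisfying S_t(u,v) = ∑_{i=0}^{k-1} S_t(u + i(v-u)/k, u + (i+1)(v-u)/k) for every k ≥ 1, and f : ℝ → [0,1] is monotone nonincreasing and Riemann integrable on [u,v]. Then (1/t) S_t(u,v) → ∫_u^v f(s) ds in probability. -/

import Mathlib

open MeasureTheory Filter

/-- Abstract Riemann-sum argument: if the normalized counts `S t u v / t` satisfy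
the two one-sided tail estimates with the nonincreasing profile `f` on every
subinterval, and `S` is additive over partitions, then `S t u v / t` converges in
probability to `∫_u^v f`. -/
theorem riemann_sum_convergence_in_probability
    {Ω : Type*} [MeasurableSpace Ω] (μ : Measure Ω) [IsProbabilityMeasure μ]
    (S : ℝ → ℝ → ℝ → Ω → ℝ)
    (hmeas : ∀ t u v, Measurable (S t u v))
    (f : ℝ → ℝ) (hf01 : ∀ u, f u ∈ Set.Icc (0:ℝ) 1) (hfmono : Antitone f)
    (hfint : ∀ u v : ℝ, IntervalIntegrable f MeasureTheory.volume u v)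
    -- additivity over equal partitions
    (hadd : ∀ t : ℝ, ∀ u v : ℝ, ∀ k : ℕ, 1 ≤ k → ∀ ω,
      S t u v ω = ∑ i ∈ Finset.range k,
        S t (u + i * (v - u) / k) (u + (i + 1) * (v - u) / k) ω)
    -- one-sided upper estimate
    (hup : ∀ u v : ℝ, u < v → ∀ ε : ℝ, 0 < ε →
      Tendsto (fun t => μ {ω | (v - u) * (f u + ε) ≤ S t u v ω / t})
        atTop (nhds 0))
    -- one-sided lower estimate
    (hlow : ∀ u v : ℝ, u < v → ∀ ε : ℝ, 0 < ε →
      Tendsto (fun t => μ {ω | S t u v ω / t ≤ (v - u) * (f v - ε)})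
        atTop (nhds 0)) :
    ∀ u v : ℝ, u < v → ∀ ε : ℝ, 0 < ε →
      Tendsto (fun t => μ {ω | ε ≤ |S t u v ω / t - ∫ s in u..v, f s|})
        atTop (nhds 0) := by
  intro u v huv ε hε
  have hvu : (0:ℝ) < v - u := by linarith
  -- choose the number of subintervals
  set k : ℕ := max 1 ⌈2 * (v - u) / ε⌉₊ with hk_def
  have hk1 : 1 ≤ k := le_max_left _ _
  have hkpos : (0:ℝ) < (k : ℝ) := by
    exact_mod_cast Nat.lt_of_lt_of_le Nat.zero_lt_one hk1
  -- mesh size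
  set h : ℝ := (v - u) / k with hh_def
  have hhpos : 0 < h := div_pos hvu hkpos
  have hh_small : h ≤ ε / 2 := by
    have h1 : 2 * (v - u) / ε ≤ (k : ℝ) := by
      calc 2 * (v - u) / ε ≤ (⌈2 * (v - u) / ε⌉₊ : ℝ) := Nat.le_ceil _
        _ ≤ (k : ℝ) := by exact_mod_cast le_max_right _ _
    rw [hh_def, div_le_div_iff₀ hkpos (by norm_num : (0:ℝ) < 2)]
    have := (div_le_iff₀ hε).mp h1
    linarith
  -- partition points
  set x : ℕ → ℝ := fun i => u + i * (v - u) / k with hx_def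
  have hx0 : x 0 = u := by simp [hx_def]
  have hxk : x k = v := by
    simp only [hx_def]; rw [mul_div_cancel_left₀ _ hkpos.ne']
    ring
  have hxstep : ∀ i : ℕ, x (i + 1) - x i = h := by
    intro i
    simp only [hx_def, hh_def]
    push_cast
    ring
  have hxlt : ∀ i : ℕ, x i < x (i + 1) := by
    intro i
    have := hxstep i
    linarith
  have hxmono : Monotone x := monotone_nat_of_le_succ fun i => (hxlt i).le
  -- the integral splits
  set I : ℝ := ∫ s in u..v, f s with hI_def
  have hIsum : ∑ i ∈ Finset.range k, ∫ s in x i..x (i + 1), f s = I := by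
    rw [hI_def, ← hx0, ← hxk]
    exact intervalIntegral.sum_integral_adjacent_intervals fun i _ => hfint _ _
  -- per-interval bounds for the integral of an antitone function
  have hint_le : ∀ i : ℕ, (∫ s in x i..x (i + 1), f s) ≤ h * f (x i) := by
    intro i
    have : (∫ s in x i..x (i + 1), f s) ≤ ∫ _ in x i..x (i + 1), f (x i) := by
      apply intervalIntegral.integral_mono_on (hxlt i).le (hfint _ _)
        intervalIntegrable_const
      intro s hs
      exact hfmono hs.1
    simpa [intervalIntegral.integral_const, hxstep i, mul_comm] using this
  have hint_ge : ∀ i : ℕ, h * f (x (i + 1)) ≤ ∫ s in x i..x (i + 1), f s := by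
    intro i
    have : (∫ _ in x i..x (i + 1), f (x (i + 1))) ≤ ∫ s in x i..x (i + 1), f s := by
      apply intervalIntegral.integral_mono_on (hxlt i).le intervalIntegrable_const
        (hfint _ _)
      intro s hs
      exact hfmono hs.2
    simpa [intervalIntegral.integral_const, hxstep i, mul_comm] using this
  -- Riemann sum bounds
  have htele : ∑ i ∈ Finset.range k, (h * f (x i) - h * f (x (i + 1))) = h * (f u - f v) := by
    rw [Finset.sum_range_sub' (fun i => h * f (x i))]
    rw [hx0, hxk]; ring
  have hfuv : f u - f v ≤ 1 := by
    have h1 := (hf01 u).2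
    have h2 := (hf01 v).1
    linarith
  have hupper : ∑ i ∈ Finset.range k, h * f (x i) ≤ I + ε / 2 := by
    have : ∑ i ∈ Finset.range k, h * f (x i)
        ≤ ∑ i ∈ Finset.range k, ((∫ s in x i..x (i + 1), f s)
          + (h * f (x i) - h * f (x (i + 1)))) := by
      apply Finset.sum_le_sum
      intro i _
      have := hint_ge i
      linarith
    rw [Finset.sum_add_distrib, hIsum, htele] at this
    have hb : h * (f u - f v) ≤ ε / 2 := by
      calc h * (f u - f v) ≤ h * 1 := by
            apply mul_le_mul_of_nonneg_left hfuv hhpos.le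
        _ = h := mul_one h
        _ ≤ ε / 2 := hh_small
    linarith
  have hlower : I - ε / 2 ≤ ∑ i ∈ Finset.range k, h * f (x (i + 1)) := by
    have : ∑ i ∈ Finset.range k, ((∫ s in x i..x (i + 1), f s)
          - (h * f (x i) - h * f (x (i + 1))))
        ≤ ∑ i ∈ Finset.range k, h * f (x (i + 1)) := by
      apply Finset.sum_le_sum
      intro i _
      have := hint_le i
      linarith
    rw [Finset.sum_sub_distrib, hIsum, htele] at this
    have hb : h * (f u - f v) ≤ ε / 2 := by
      calc h * (f u - f v) ≤ h * 1 := by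
            apply mul_le_mul_of_nonneg_left hfuv hhpos.le
        _ = h := mul_one h
        _ ≤ ε / 2 := hh_small
    linarith
  -- the small parameter
  set δ : ℝ := ε / (2 * (v - u)) with hδ_def
  have hδpos : 0 < δ := div_pos hε (by linarith)
  have hδvu : (v - u) * δ = ε / 2 := by
    rw [hδ_def]; field_simp
  -- bad events on subintervals
  set A : ℕ → ℝ → Set Ω :=
    fun i t => {ω | h * (f (x i) + δ) ≤ S t (x i) (x (i + 1)) ω / t} with hA_def
  set B : ℕ → ℝ → Set Ω :=
    fun i t => {ω | S t (x i) (x (i + 1)) ω / t ≤ h * (f (x (i + 1)) - δ)} with hB_def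
  -- each bad event tends to zero
  have hA0 : ∀ i : ℕ, Tendsto (fun t => μ (A i t)) atTop (nhds 0) := by
    intro i
    have := hup (x i) (x (i + 1)) (hxlt i) δ hδpos
    simpa [hA_def, hxstep i] using this
  have hB0 : ∀ i : ℕ, Tendsto (fun t => μ (B i t)) atTop (nhds 0) := by
    intro i
    have := hlow (x i) (x (i + 1)) (hxlt i) δ hδpos
    simpa [hB_def, hxstep i] using this
  -- inclusion of the main event in the union of bad events
  have hincl : ∀ t : ℝ, {ω | ε ≤ |S t u v ω / t - I|}
      ⊆ (⋃ i ∈ Finset.range k, A i t) ∪ (⋃ i ∈ Finset.range k, B i t) := by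
    intro t ω hω
    by_contra hcon
    simp only [Set.mem_union, Set.mem_iUnion, not_or, not_exists] at hcon
    obtain ⟨hnA, hnB⟩ := hcon
    have hAlt : ∀ i ∈ Finset.range k, S t (x i) (x (i + 1)) ω / t < h * (f (x i) + δ) := by
      intro i hi
      have := hnA i hi
      simp only [hA_def, Set.mem_setOf_eq, not_le] at this
      exact this
    have hBgt : ∀ i ∈ Finset.range k, h * (f (x (i + 1)) - δ) < S t (x i) (x (i + 1)) ω / t := by
      intro i hi
      have := hnB i hi
      simp only [hB_def, Set.mem_setOf_eq, not_le] at this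
      exact this
    have hdecomp : S t u v ω / t = ∑ i ∈ Finset.range k, S t (x i) (x (i + 1)) ω / t := by
      rw [hadd t u v k hk1 ω, Finset.sum_div]
      apply Finset.sum_congr rfl
      intro i _
      congr 2 <;> · simp only [hx_def]; push_cast; ring
    have hkh : (k : ℝ) * h = v - u := by
      rw [hh_def]; field_simp
    have hub : S t u v ω / t < I + ε := by
      calc S t u v ω / t = ∑ i ∈ Finset.range k, S t (x i) (x (i + 1)) ω / t := hdecomp
        _ < ∑ i ∈ Finset.range k, h * (f (x i) + δ) := by
            apply Finset.sum_lt_sum_of_nonempty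
            · exact Finset.nonempty_range_iff.mpr (by omega)
            · exact hAlt
        _ = (∑ i ∈ Finset.range k, h * f (x i)) + (k : ℝ) * (h * δ) := by
            simp only [mul_add]
            rw [Finset.sum_add_distrib, Finset.sum_const, Finset.card_range, nsmul_eq_mul]
        _ ≤ I + ε / 2 + (v - u) * δ := by
            have : (k : ℝ) * (h * δ) = (v - u) * δ := by rw [← mul_assoc, hkh]
            rw [this]
            linarith [hupper]
        _ = I + ε := by rw [hδvu]; ring
    have hlb : I - ε < S t u v ω / t := by
      calc I - ε = I - ε / 2 - (v - u) * δ := by rw [hδvu]; ring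
        _ ≤ (∑ i ∈ Finset.range k, h * f (x (i + 1))) - (k : ℝ) * (h * δ) := by
            have : (k : ℝ) * (h * δ) = (v - u) * δ := by rw [← mul_assoc, hkh]
            rw [this]
            linarith [hlower]
        _ = ∑ i ∈ Finset.range k, h * (f (x (i + 1)) - δ) := by
            simp only [mul_sub]
            rw [Finset.sum_sub_distrib, Finset.sum_const, Finset.card_range, nsmul_eq_mul]
        _ < ∑ i ∈ Finset.range k, S t (x i) (x (i + 1)) ω / t := by
            apply Finset.sum_lt_sum_of_nonempty
            · exact Finset.nonempty_range_iff.mpr (by omega)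
            · exact hBgt
        _ = S t u v ω / t := hdecomp.symm
    have : |S t u v ω / t - I| < ε := abs_sub_lt_iff.mpr ⟨by linarith, by linarith⟩
    exact absurd hω (by simp only [Set.mem_setOf_eq, not_le]; exact this)
  -- finish by squeezing
  have hbound : ∀ t : ℝ, μ {ω | ε ≤ |S t u v ω / t - I|}
      ≤ (∑ i ∈ Finset.range k, μ (A i t)) + ∑ i ∈ Finset.range k, μ (B i t) := by
    intro t
    calc μ {ω | ε ≤ |S t u v ω / t - I|}
        ≤ μ ((⋃ i ∈ Finset.range k, A i t) ∪ ⋃ i ∈ Finset.range k, B i t) :=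
          measure_mono (hincl t)
      _ ≤ μ (⋃ i ∈ Finset.range k, A i t) + μ (⋃ i ∈ Finset.range k, B i t) :=
          measure_union_le _ _
      _ ≤ (∑ i ∈ Finset.range k, μ (A i t)) + ∑ i ∈ Finset.range k, μ (B i t) := by
          gcongr <;> exact measure_biUnion_finset_le _ _
  have hsum0 : Tendsto (fun t => (∑ i ∈ Finset.range k, μ (A i t))
      + ∑ i ∈ Finset.range k, μ (B i t)) atTop (nhds 0) := by
    have h1 : Tendsto (fun t => ∑ i ∈ Finset.range k, μ (A i t)) atTop (nhds 0) := by
      have := tendsto_finset_sum (Finset.range k) (fun i _ => hA0 i)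
      simpa using this
    have h2 : Tendsto (fun t => ∑ i ∈ Finset.range k, μ (B i t)) atTop (nhds 0) := by
      have := tendsto_finset_sum (Finset.range k) (fun i _ => hB0 i)
      simpa using this
    simpa using h1.add h2
  exact tendsto_of_tendsto_of_tendsto_of_le_of_le tendsto_const_nhds hsum0
    (fun t => zero_le) hbound
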